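/- arXiv:1612.05127 — 3 statements merged into one kernel-verified Lean document; each statement's English description precedes it below -/
import Mathlib

section
/- Let Γ = (V,E) be an infinite coconnected graph with at least two vertices and (S_v)_{v∈V} a family of nontrivial right LCM monoids. Then every foundation set for the graph product S_Γ contains an invertible element. Consequently S_Γ has property (AR). -/
section RightLCMBasics
variable (S : Type*) [Monoid S]

/-- The principal right ideal `sS`. -/
def pIdeal {S : Type*} [Monoid S] (s : S) : Set S := Set.range (fun r => s * r)

/-- `s ⊥ t` : the principal right ideals are disjoint. -/
def Orth {S : Type*} [Monoid S] (s t : S) : Prop := pIdeal s ∩ pIdeal t = ∅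

/-- Left cancellativity. -/
def LeftCancellative : Prop := ∀ a b c : S, a * b = a * c → b = c

/-- Right LCM property: intersections of principal right ideals are empty or principal. -/
def IsRightLCM : Prop :=
  ∀ s t : S, pIdeal s ∩ pIdeal t = ∅ ∨ ∃ r : S, pIdeal s ∩ pIdeal t = pIdeal r

/-- The core subsemigroup `S_c`. -/
def core : Set S := {a | ∀ s : S, ¬ Orth a s}

/-- The core relation `s ∼ t` : `sa = tb` for some core elements `a, b`. -/
def coreRel {S : Type*} [Monoid S] (s t : S) : Prop :=
  ∃ a ∈ core S, ∃ b ∈ core S, s * a = t * b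

/-- A (finite) foundation set. -/
def IsFoundationSet {S : Type*} [Monoid S] (F : Set S) : Prop :=
  F.Finite ∧ ∀ s : S, ∃ f ∈ F, ¬ Orth f s

/-- Accuracy: distinct elements are mutually orthogonal. -/
def Accurate {S : Type*} [Monoid S] (F : Set S) : Prop :=
  ∀ f ∈ F, ∀ g ∈ F, f ≠ g → Orth f g

/-- Property (AR): every foundation set admits an accurate refinement. -/
def HasAR : Prop :=
  ∀ F : Set S, IsFoundationSet F →
    ∃ F' : Set S, IsFoundationSet F' ∧ Accurate F' ∧
      F' ⊆ {x | ∃ f ∈ F, ∃ r : S, x = f * r}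

end RightLCMBasics

/-- The congruence on the free product implementing the graph product relations. -/
def graphProductCon {V : Type*} (G : SimpleGraph V) (S : V → Type*) [∀ v, Monoid (S v)] :
    Con (Monoid.CoprodI S) :=
  conGen (fun x y => ∃ (v w : V) (s : S v) (t : S w), G.Adj v w ∧
    x = Monoid.CoprodI.of s * Monoid.CoprodI.of t ∧
    y = Monoid.CoprodI.of t * Monoid.CoprodI.of s)

/-- The graph product of a family of monoids over a graph. -/
def GraphProduct {V : Type*} (G : SimpleGraph V) (S : V → Type*) [∀ v, Monoid (S v)] :=
  (graphProductCon G S).Quotient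

instance {V : Type*} (G : SimpleGraph V) (S : V → Type*) [∀ v, Monoid (S v)] :
    Monoid (GraphProduct G S) :=
  inferInstanceAs (Monoid (graphProductCon G S).Quotient)

/-- The quotient map from the free product onto the graph product. -/
def GraphProduct.mk {V : Type*} (G : SimpleGraph V) (S : V → Type*) [∀ v, Monoid (S v)] :
    Monoid.CoprodI S →* GraphProduct G S := Con.mk' _

open List Function

namespace GPAux

variable {V : Type*} (G : SimpleGraph V) (S : V → Type*) [∀ v, Monoid (S v)]

/-- One-letter image in the graph product. -/
def ltr (l : Σ v, S v) : GraphProduct G S := GraphProduct.mk G S (Monoid.CoprodI.of l.2)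

/-- The product of a word of letters. -/
def wordProd (L : List (Σ v, S v)) : GraphProduct G S := (L.map (ltr G S)).prod

@[simp] lemma wordProd_nil : wordProd G S [] = 1 := rfl

@[simp] lemma wordProd_cons (l : Σ v, S v) (L : List (Σ v, S v)) :
    wordProd G S (l :: L) = ltr G S l * wordProd G S L := by
  simp [wordProd]

@[simp] lemma wordProd_append (L K : List (Σ v, S v)) :
    wordProd G S (L ++ K) = wordProd G S L * wordProd G S K := by
  simp [wordProd]

lemma exists_word (g : GraphProduct G S) : ∃ L, wordProd G S L = g := by
  obtain ⟨x, rfl⟩ := Con.mk'_surjective (c := graphProductCon G S) g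
  induction x using Monoid.CoprodI.induction_left with
  | one => exact ⟨[], (map_one (GraphProduct.mk G S)).symm⟩
  | mul m x ih =>
    obtain ⟨L, hL⟩ := ih
    refine ⟨⟨_, m⟩ :: L, ?_⟩
    rw [wordProd_cons, hL, ltr, map_mul]
    rfl

lemma isUnit_wordProd {L : List (Σ v, S v)} (h : ∀ l ∈ L, IsUnit l.2) :
    IsUnit (wordProd G S L) := by
  induction L with
  | nil => simp
  | cons l L ih =>
    rw [wordProd_cons]
    exact ((h l (mem_cons_self)).map ((GraphProduct.mk G S).comp Monoid.CoprodI.of)).mul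
      (ih fun x hx => h x (mem_cons_of_mem _ hx))

/-- In a left cancellative monoid, a product is a unit iff both factors are. -/
lemma isUnit_mul_iff_of_lc {M : Type*} [Monoid M] (h : LeftCancellative M) {s t : M} :
    IsUnit (s * t) ↔ IsUnit s ∧ IsUnit t := by
  constructor
  · intro hst
    obtain ⟨w, hw⟩ := hst
    have h1 : s * (t * ↑w⁻¹) = 1 := by rw [← mul_assoc, ← hw]; exact w.mul_inv
    have h2 : (t * ↑w⁻¹) * s = 1 := by
      apply h s
      rw [← mul_assoc, h1, one_mul, mul_one]
    have hs : IsUnit s := isUnit_iff_exists.2 ⟨t * ↑w⁻¹, h1, h2⟩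
    refine ⟨hs, ?_⟩
    have ht : t = (t * ↑w⁻¹) * (s * t) := by
      rw [mul_assoc, ← hw, w.inv_mul, mul_one]
    rw [ht]
    exact (isUnit_iff_exists.2 ⟨s, h2, h1⟩).mul ⟨w, hw⟩
  · rintro ⟨a, b⟩; exact a.mul b

end GPAux

namespace GPAux

open List Function Classical

variable {V : Type*} {G : SimpleGraph V} {S : V → Type*} [∀ v, Monoid (S v)]

/-- Machine data: a `Gᶜ`-path given as `chain ++ [anch]`. -/
structure Mach (G : SimpleGraph V) (S : V → Type*) where
  chain : List V
  anch : V
  ne : chain ≠ []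
  nodup : (chain ++ [anch]).Nodup
  compat : (chain ++ [anch]).Chain' (fun a b => ¬ G.Adj a b)

/-- `nxt c v`: `none` if `v ∉ c`, otherwise `some o` where `o` is the successor
of (the first occurrence of) `v` in `c` (`none` if `v` is last). -/
noncomputable def nxt : List V → V → Option (Option V)
  | [] => fun _ => none
  | a :: rest => fun v => if v = a then some rest.head? else nxt rest v

@[simp] lemma nxt_nil (v : V) : nxt ([] : List V) v = none := rfl

lemma nxt_cons (a : V) (rest : List V) (v : V) :
    nxt (a :: rest) v = if v = a then some rest.head? else nxt rest v := rfl

lemma nxt_of_not_mem {c : List V} {v : V} (h : v ∉ c) : nxt c v = none := by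
  induction c with
  | nil => rfl
  | cons a rest ih =>
    rw [nxt_cons, if_neg (fun hv => h (by rw [hv]; exact mem_cons_self))]
    exact ih (fun hv => h (mem_cons_of_mem _ hv))

lemma nxt_append_cons {v : V} (rest : List V) {pre : List V} (h : v ∉ pre) :
    nxt (pre ++ v :: rest) v = some rest.head? := by
  induction pre with
  | nil => rw [nil_append, nxt_cons, if_pos rfl]
  | cons a p ih =>
    rw [cons_append, nxt_cons, if_neg (fun hv => h (by rw [hv]; exact mem_cons_self))]
    exact ih (fun hv => h (mem_cons_of_mem _ hv))

lemma nxt_ne_of_nodup {c : List V} (hc : c.Nodup) {v w : V}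
    (h : nxt c v = some (some w)) : v ≠ w := by
  induction c with
  | nil => rw [nxt_nil] at h; exact absurd h (by simp)
  | cons a rest ih =>
    rw [nxt_cons] at h
    by_cases hv : v = a
    · rw [if_pos hv] at h
      injection h with h'
      cases rest with
      | nil => exact absurd h' (by simp)
      | cons b t =>
        rw [head?_cons] at h'
        injection h' with h''
        intro hvw
        apply (nodup_cons.1 hc).1
        rw [← hv, hvw, ← h'']
        exact mem_cons_self
    · rw [if_neg hv] at h
      exact ih (nodup_cons.1 hc).2 h

lemma nxt_rel {R : V → V → Prop} {c : List V} (hc : c.Chain' R) {v w : V}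
    (h : nxt c v = some (some w)) : R v w := by
  induction c with
  | nil => rw [nxt_nil] at h; exact absurd h (by simp)
  | cons a rest ih =>
    rw [nxt_cons] at h
    by_cases hv : v = a
    · rw [if_pos hv] at h
      injection h with h'
      cases rest with
      | nil => exact absurd h' (by simp)
      | cons b t =>
        rw [head?_cons] at h'
        injection h' with h''
        subst hv
        subst h''
        exact (isChain_cons_cons.1 hc).1
    · rw [if_neg hv] at h
      exact ih hc.tail h

lemma nxt_last_rel {R : V → V → Prop} {c : List V} {d : V}
    (hc : (c ++ [d]).Chain' R) {v : V} (h : nxt c v = some none) : R v d := by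
  induction c with
  | nil => rw [nxt_nil] at h; exact absurd h (by simp)
  | cons a rest ih =>
    rw [nxt_cons] at h
    by_cases hv : v = a
    · rw [if_pos hv] at h
      injection h with h'
      cases rest with
      | cons b t => exact absurd h' (by simp)
      | nil =>
        subst hv
        simp only [cons_append, nil_append] at hc
        exact (isChain_cons_cons.1 hc).1
    · rw [if_neg hv] at h
      have hrne : rest ≠ [] := by
        rintro rfl
        rw [nxt_nil] at h
        exact absurd h (by simp)
      refine ih ?_ h
      have := hc.tail
      rwa [cons_append, List.tail_cons] at this

lemma nxt_mem {c : List V} {v : V} {o : Option (Option V)} (h : nxt c v = some o) :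
    v ∈ c := by
  by_contra hv
  rw [nxt_of_not_mem hv] at h
  exact absurd h (by simp)

/-- The state space of a machine. -/
abbrev XS (S : V → Type*) [∀ v, Monoid (S v)] : Type _ := (∀ v, S v) × Bool

/-- The reset state. -/
def cst : XS S := (fun _ => 1, true)

/-- The control predicate. -/
def ctrlRead (o : Option V) (σ : XS S) : Prop :=
  o.elim (σ.2 = true) (fun w => σ.1 w ≠ 1)

@[simp] lemma ctrlRead_some (w : V) (σ : XS S) : ctrlRead (some w) σ = (σ.1 w ≠ 1) := rfl
@[simp] lemma ctrlRead_none (σ : XS S) : ctrlRead (none : Option V) σ = (σ.2 = true) := rfl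

/-- The action of the letter `s` at vertex `v` on the machine state. -/
noncomputable def act (M : Mach G S) (v : V) (s : S v) : XS S → XS S := fun σ =>
  (nxt M.chain v).elim
    (if v = M.anch ∧ ¬ IsUnit s then cst else σ)
    (fun o => if ctrlRead o σ then (Function.update σ.1 v (s * σ.1 v), σ.2) else σ)

lemma act_eq_chain (M : Mach G S) {v : V} {o : Option V} (h : nxt M.chain v = some o)
    (s : S v) (σ : XS S) :
    act M v s σ = if ctrlRead o σ then (Function.update σ.1 v (s * σ.1 v), σ.2) else σ := by
  unfold act
  rw [h]
  rfl

lemma act_eq_none (M : Mach G S) {v : V} (h : nxt M.chain v = none) (s : S v) (σ : XS S) :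
    act M v s σ = if v = M.anch ∧ ¬ IsUnit s then cst else σ := by
  unfold act
  rw [h]
  rfl

lemma ctrlRead_of_ne {o : Option V} {σ τ : XS S} (h2 : σ.2 = τ.2)
    (h : ∀ w, o = some w → σ.1 w = τ.1 w) : (ctrlRead o σ ↔ ctrlRead o τ) := by
  cases o with
  | none => rw [ctrlRead_none, ctrlRead_none, h2]
  | some w => rw [ctrlRead_some, ctrlRead_some, h w rfl]

end GPAux

namespace GPAux

open List Function Classical

variable {V : Type*} {G : SimpleGraph V} {S : V → Type*} [∀ v, Monoid (S v)]

lemma act_one (M : Mach G S) (v : V) : act M v (1 : S v) = id := by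
  funext σ
  cases h : nxt M.chain v with
  | some o =>
    rw [act_eq_chain M h]
    split
    · simp
    · rfl
  | none =>
    rw [act_eq_none M h]
    simp

lemma act_mul (M : Mach G S) (hA : LeftCancellative (S M.anch)) (v : V) (s t : S v) :
    act M v (s * t) = act M v s ∘ act M v t := by
  funext σ
  simp only [Function.comp_apply]
  cases h : nxt M.chain v with
  | some o =>
    by_cases hc : ctrlRead o σ
    · have hvo : ∀ w, o = some w → w ≠ v := by
        rintro w rfl
        exact (nxt_ne_of_nodup (M.nodup.of_append_left) h).symm
      have hc' : ctrlRead o (Function.update σ.1 v (t * σ.1 v), σ.2) := by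
        refine (ctrlRead_of_ne (σ := σ)
          (τ := (Function.update σ.1 v (t * σ.1 v), σ.2)) rfl ?_).1 hc
        intro w hw
        exact (Function.update_of_ne (hvo w hw) _ _).symm
      have e1 : act M v t σ = (Function.update σ.1 v (t * σ.1 v), σ.2) := by
        rw [act_eq_chain M h, if_pos hc]
      have e2 : act M v s (Function.update σ.1 v (t * σ.1 v), σ.2) =
          (Function.update (Function.update σ.1 v (t * σ.1 v)) v
            (s * (Function.update σ.1 v (t * σ.1 v)) v), σ.2) := by
        rw [act_eq_chain M h, if_pos hc']
      rw [act_eq_chain M h, if_pos hc, e1, e2]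
      simp only [Function.update_self, Function.update_idem, Prod.mk.injEq, and_true]
      rw [mul_assoc]
    · have e1 : act M v t σ = σ := by rw [act_eq_chain M h, if_neg hc]
      have e2 : act M v s σ = σ := by rw [act_eq_chain M h, if_neg hc]
      rw [act_eq_chain M h, if_neg hc, e1, e2]
  | none =>
    rw [act_eq_none M h, act_eq_none M h t σ]
    by_cases hv : v = M.anch
    · subst hv
      by_cases hs : IsUnit s <;> by_cases ht : IsUnit t
      · rw [if_neg (by simp [hs.mul ht]), if_neg (by simp [ht]),
          act_eq_none M h, if_neg (by simp [hs])]
      · have hst : ¬ IsUnit (s * t) := fun hst => ht ((isUnit_mul_iff_of_lc hA).1 hst).2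
        rw [if_pos ⟨rfl, hst⟩, if_pos ⟨rfl, ht⟩, act_eq_none M h, if_neg (by simp [hs])]
      · have hst : ¬ IsUnit (s * t) := fun hst => hs ((isUnit_mul_iff_of_lc hA).1 hst).1
        rw [if_pos ⟨rfl, hst⟩, if_neg (by simp [ht]), act_eq_none M h, if_pos ⟨rfl, hs⟩]
      · have hst : ¬ IsUnit (s * t) := fun hst => hs ((isUnit_mul_iff_of_lc hA).1 hst).1
        rw [if_pos ⟨rfl, hst⟩, if_pos ⟨rfl, ht⟩, act_eq_none M h, if_pos ⟨rfl, hs⟩]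
    · rw [if_neg (by simp [hv]), if_neg (by simp [hv]), act_eq_none M h,
        if_neg (by simp [hv])]

lemma act_cst_of_chain (M : Mach G S) {v : V} {o : Option V} (h : nxt M.chain v = some o)
    (hvA : G.Adj v M.anch) (s : S v) : act M v s (cst : XS S) = cst := by
  rw [act_eq_chain M h]
  cases o with
  | some w => rw [if_neg]; simp [ctrlRead, cst]
  | none => exact absurd hvA (nxt_last_rel M.compat h)

lemma act_comm_aux (M : Mach G S) {v w : V} (hadj : G.Adj v w)
    (hw : nxt M.chain w = none) (s : S v) (t : S w) :
    act M v s ∘ act M w t = act M w t ∘ act M v s := by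
  by_cases hwa : w = M.anch ∧ ¬ IsUnit t
  · -- `act M w t` is the constant map to `cst`
    have hconst : ∀ σ, act M w t σ = cst := fun σ => by
      rw [act_eq_none M hw, if_pos hwa]
    funext σ
    simp only [Function.comp_apply, hconst]
    cases hv : nxt M.chain v with
    | some o =>
      rw [act_cst_of_chain M hv (hwa.1 ▸ hadj) s]
    | none =>
      rw [act_eq_none M hv]
      split <;> rfl
  · have hid : ∀ σ, act M w t σ = σ := fun σ => by
      rw [act_eq_none M hw, if_neg hwa]
    funext σ
    simp only [Function.comp_apply, hid]

lemma act_comm (M : Mach G S) {v w : V} (hadj : G.Adj v w) (s : S v) (t : S w) :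
    act M v s ∘ act M w t = act M w t ∘ act M v s := by
  cases hw : nxt M.chain w with
  | none => exact act_comm_aux M hadj hw s t
  | some ow =>
    cases hv : nxt M.chain v with
    | none => exact (act_comm_aux M hadj.symm hv t s).symm
    | some ov =>
      -- both on the chain
      have hvw : v ≠ w := hadj.ne
      have hchain : M.chain.Chain' (fun a b => ¬ G.Adj a b) := by
        have := M.compat
        replace this := List.isChain_append.1 this
        exact this.1
      have hvo : ∀ u, ov = some u → u ≠ w := by
        rintro u rfl hu
        exact (nxt_rel hchain (hu ▸ hv)) hadj
      have hwo : ∀ u, ow = some u → u ≠ v := by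
        rintro u rfl hu
        exact (nxt_rel hchain (hu ▸ hw)) hadj.symm
      funext σ
      simp only [Function.comp_apply]
      rw [act_eq_chain M hw t σ, act_eq_chain M hv s σ]
      by_cases hcw : ctrlRead ow σ <;> by_cases hcv : ctrlRead ov σ
      · rw [if_pos hcw, if_pos hcv, act_eq_chain M hv, act_eq_chain M hw]
        have hcv' : ctrlRead ov (Function.update σ.1 w (t * σ.1 w), σ.2) := by
          refine (ctrlRead_of_ne (σ := σ)
            (τ := (Function.update σ.1 w (t * σ.1 w), σ.2)) rfl ?_).1 hcv
          intro u hu; exact (Function.update_of_ne (hvo u hu) _ _).symm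
        have hcw' : ctrlRead ow (Function.update σ.1 v (s * σ.1 v), σ.2) := by
          refine (ctrlRead_of_ne (σ := σ)
            (τ := (Function.update σ.1 v (s * σ.1 v), σ.2)) rfl ?_).1 hcw
          intro u hu; exact (Function.update_of_ne (hwo u hu) _ _).symm
        rw [if_pos hcv', if_pos hcw']
        simp only [Prod.mk.injEq, and_true]
        rw [Function.update_of_ne hvw.symm, Function.update_of_ne hvw,
          Function.update_comm hvw]
      · rw [if_pos hcw, if_neg hcv, act_eq_chain M hv, act_eq_chain M hw, if_pos hcw]
        have hcv' : ¬ ctrlRead ov (Function.update σ.1 w (t * σ.1 w), σ.2) := by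
          refine fun hx => hcv ((ctrlRead_of_ne (σ := σ)
            (τ := (Function.update σ.1 w (t * σ.1 w), σ.2)) rfl ?_).2 hx)
          intro u hu; exact (Function.update_of_ne (hvo u hu) _ _).symm
        rw [if_neg hcv']
      · rw [if_neg hcw, if_pos hcv, act_eq_chain M hw, act_eq_chain M hv, if_pos hcv]
        have hcw' : ¬ ctrlRead ow (Function.update σ.1 v (s * σ.1 v), σ.2) := by
          refine fun hx => hcw ((ctrlRead_of_ne (σ := σ)
            (τ := (Function.update σ.1 v (s * σ.1 v), σ.2)) rfl ?_).2 hx)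
          intro u hu; exact (Function.update_of_ne (hwo u hu) _ _).symm
        rw [if_neg hcw']
      · rw [if_neg hcw, if_neg hcv, act_eq_chain M hw, act_eq_chain M hv,
          if_neg hcw, if_neg hcv]

end GPAux

namespace GPAux

open List Function Classical

variable {V : Type*} {G : SimpleGraph V} {S : V → Type*} [∀ v, Monoid (S v)]

/-- The per-vertex action as a monoid homomorphism into `Function.End`. -/
noncomputable def actHom (M : Mach G S) (hA : LeftCancellative (S M.anch)) (v : V) :
    S v →* Function.End (XS S) where
  toFun s := act M v s
  map_one' := act_one M v
  map_mul' s t := act_mul M hA v s t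

/-- The machine homomorphism on the graph product. -/
noncomputable def mhom (M : Mach G S) (hA : LeftCancellative (S M.anch)) :
    GraphProduct G S →* Function.End (XS S) :=
  Con.lift _ (Monoid.CoprodI.lift (actHom M hA)) (by
    rw [graphProductCon]
    refine Con.conGen_le.2 ?_
    rintro x y ⟨v, w, s, t, hadj, rfl, rfl⟩
    rw [Con.ker_rel]
    simp only [map_mul, Monoid.CoprodI.lift_of]
    exact act_comm M hadj s t)

lemma mhom_ltr (M : Mach G S) (hA : LeftCancellative (S M.anch)) (l : Σ v, S v) :
    mhom M hA (ltr G S l) = act M l.1 l.2 := by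
  have h1 : mhom M hA (ltr G S l)
      = Monoid.CoprodI.lift (actHom M hA) (Monoid.CoprodI.of l.2) :=
    Con.lift_mk' _ _
  rw [h1, Monoid.CoprodI.lift_of]
  rfl

/-- Pure list-level run of the machine. -/
noncomputable def run (M : Mach G S) (L : List (Σ v, S v)) (σ : XS S) : XS S :=
  L.foldr (fun l τ => act M l.1 l.2 τ) σ

@[simp] lemma run_nil (M : Mach G S) (σ : XS S) : run M [] σ = σ := rfl

@[simp] lemma run_cons (M : Mach G S) (l : Σ v, S v) (L : List (Σ v, S v)) (σ : XS S) :
    run M (l :: L) σ = act M l.1 l.2 (run M L σ) := rfl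

lemma run_append (M : Mach G S) (L K : List (Σ v, S v)) (σ : XS S) :
    run M (L ++ K) σ = run M L (run M K σ) := by
  simp [run, List.foldr_append]

lemma mhom_wordProd (M : Mach G S) (hA : LeftCancellative (S M.anch))
    (L : List (Σ v, S v)) (σ : XS S) :
    mhom M hA (wordProd G S L) σ = run M L σ := by
  induction L with
  | nil => rw [wordProd_nil, map_one]; rfl
  | cons l L ih =>
    rw [wordProd_cons, map_mul]
    show mhom M hA (ltr G S l) (mhom M hA (wordProd G S L) σ) = _
    rw [ih, mhom_ltr, run_cons]

lemma run_fst_one (M : Mach G S) {u : V} {L : List (Σ v, S v)} (h : ∀ l ∈ L, l.1 ≠ u)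
    {σ : XS S} (hσ : σ.1 u = 1) : (run M L σ).1 u = 1 := by
  induction L with
  | nil => exact hσ
  | cons l L ih =>
    have hτ := ih (fun x hx => h x (mem_cons_of_mem _ hx))
    rw [run_cons]
    have hlu : l.1 ≠ u := h l (mem_cons_self)
    cases hn : nxt M.chain l.1 with
    | some o =>
      rw [act_eq_chain M hn]
      split
      · simpa [Function.update_of_ne (Ne.symm hlu)] using hτ
      · exact hτ
    | none =>
      rw [act_eq_none M hn]
      split
      · simp [cst]
      · exact hτ

lemma run_fst_exact (M : Mach G S) {u : V} {L : List (Σ v, S v)}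
    (h : ∀ l ∈ L, l.1 ≠ u ∧ (l.1 = M.anch → IsUnit l.2)) (σ : XS S) :
    (run M L σ).1 u = σ.1 u := by
  induction L with
  | nil => rfl
  | cons l L ih =>
    have hτ := ih (fun x hx => h x (mem_cons_of_mem _ hx))
    obtain ⟨hlu, hla⟩ := h l (mem_cons_self)
    rw [run_cons]
    cases hn : nxt M.chain l.1 with
    | some o =>
      rw [act_eq_chain M hn]
      split
      · simpa [Function.update_of_ne (Ne.symm hlu)] using hτ
      · exact hτ
    | none =>
      rw [act_eq_none M hn]
      rw [if_neg (fun hx => hx.2 (hla hx.1))]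
      exact hτ

lemma run_cascade (M : Mach G S) :
    ∀ (suf : List (Σ v, S v)) (pre : List V),
      M.chain = pre ++ suf.map Sigma.fst → (∀ l ∈ suf, l.2 ≠ (1 : S l.1)) →
      (run M suf (cst : XS S)).2 = true ∧
      (∀ l ∈ suf, (run M suf (cst : XS S)).1 l.1 = l.2) ∧
      (∀ x, x ∉ suf.map Sigma.fst → (run M suf (cst : XS S)).1 x = 1) := by
  intro suf
  induction suf with
  | nil => intro pre _ _; exact ⟨rfl, by simp, fun x _ => rfl⟩
  | cons l suf ih =>
    intro pre hpre hne
    have hpre' : M.chain = (pre ++ [l.1]) ++ suf.map Sigma.fst := by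
      rw [hpre]; simp
    obtain ⟨ih2, ihmem, ihout⟩ := ih (pre ++ [l.1]) hpre'
      (fun x hx => hne x (mem_cons_of_mem _ hx))
    have hnodup : M.chain.Nodup := M.nodup.of_append_left
    have hnd : (pre ++ l.1 :: suf.map Sigma.fst).Nodup := by
      have := hnodup
      rw [hpre, map_cons] at this
      exact this
    have hl1pre : l.1 ∉ pre := by
      rw [List.nodup_append] at hnd
      exact fun hx => hnd.2.2 _ hx _ mem_cons_self rfl
    have hl1suf : l.1 ∉ suf.map Sigma.fst := by
      rw [List.nodup_append] at hnd
      exact (nodup_cons.1 hnd.2.1).1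
    have hn : nxt M.chain l.1 = some (suf.map Sigma.fst).head? := by
      rw [hpre]; rw [map_cons]; exact nxt_append_cons _ hl1pre
    have hctrl : ctrlRead ((suf.map Sigma.fst).head?) (run M suf (cst : XS S)) := by
      cases suf with
      | nil => exact rfl
      | cons l' suf' =>
        have h1 := ihmem l' (mem_cons_self)
        have h2 := hne l' (mem_cons_of_mem _ (mem_cons_self))
        simp only [map_cons, head?_cons]
        show (run M (l' :: suf') (cst : XS S)).1 l'.1 ≠ 1
        rw [h1]; exact h2
    rw [run_cons, act_eq_chain M hn, if_pos hctrl]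
    set τ : XS S := run M suf (cst : XS S) with hτ
    have hτl : τ.1 l.1 = 1 := ihout l.1 hl1suf
    refine ⟨ih2, ?_, ?_⟩
    · intro x hx
      rcases mem_cons.1 hx with rfl | hx'
      · simp only [Function.update_self, hτl, mul_one]
      · have hxl : x.1 ≠ l.1 := by
          intro he
          exact hl1suf (he ▸ List.mem_map_of_mem (f := Sigma.fst) hx')
        simp only [Function.update_of_ne hxl]
        exact ihmem x hx'
    · intro x hx
      simp only [map_cons, mem_cons, not_or] at hx
      show update τ.1 l.fst (l.snd * τ.1 l.fst) x = 1
      rw [Function.update_of_ne hx.1]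
      exact ihout x hx.2

end GPAux

namespace GPAux

open List Function Classical

variable {V : Type*} {G : SimpleGraph V} {S : V → Type*} [∀ v, Monoid (S v)]

lemma anch_not_mem_chain (M : Mach G S) : M.anch ∉ M.chain := by
  have := M.nodup
  rw [List.nodup_append] at this
  exact fun hx => this.2.2 _ hx _ (mem_singleton_self _) rfl

lemma act_anch_nonunit (M : Mach G S) {c : S M.anch} (hc : ¬ IsUnit c) (σ : XS S) :
    act M M.anch c σ = cst := by
  rw [act_eq_none M (nxt_of_not_mem (anch_not_mem_chain M)), if_pos ⟨rfl, hc⟩]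

/-- The core orthogonality theorem. -/
theorem coreOrth (M : Mach G S) (hA : LeftCancellative (S M.anch))
    {u : V}
    (P Rf : List (Σ v, S v)) (c : S M.anch) (hc : ¬ IsUnit c)
    (hfu : ∀ l ∈ P, l.1 ≠ u)
    (PRE CL POST : List (Σ v, S v)) (t : S M.anch) (ht : ¬ IsUnit t)
    (hCL : CL.map Sigma.fst = M.chain)
    (hu : (CL.map Sigma.fst).head? = some u)
    (hCL1 : ∀ l ∈ CL, l.2 ≠ (1 : S l.1))
    (hPRE : ∀ l ∈ PRE, l.1 ≠ u ∧ (l.1 = M.anch → IsUnit l.2)) :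
    Orth (wordProd G S (P ++ ⟨M.anch, c⟩ :: Rf))
      (wordProd G S (PRE ++ (CL ++ ⟨M.anch, t⟩ :: POST))) := by
  have hCLval : (run M CL (cst : XS S)).1 u ≠ 1 := by
    have hcasc := run_cascade M CL [] (by simp [hCL]) hCL1
    obtain ⟨l₀, CL', rfl⟩ : ∃ l₀ CL', CL = l₀ :: CL' := by
      cases CL with
      | nil => simp at hu
      | cons l₀ CL' => exact ⟨l₀, CL', rfl⟩
    have hl₀ : l₀.1 = u := by
      simp only [map_cons, head?_cons, Option.some.injEq] at hu
      exact hu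
    rw [← hl₀, hcasc.2.1 l₀ (mem_cons_self)]
    exact hCL1 l₀ (mem_cons_self)
  rw [Orth, Set.eq_empty_iff_forall_notMem]
  rintro x ⟨⟨a, ha⟩, ⟨b, hb⟩⟩
  have ha' : wordProd G S (P ++ ⟨M.anch, c⟩ :: Rf) * a = x := ha
  have hb' : wordProd G S (PRE ++ (CL ++ ⟨M.anch, t⟩ :: POST)) * b = x := hb
  have e1 : (mhom M hA x (cst : XS S)).1 u = 1 := by
    rw [← ha', map_mul]
    show (mhom M hA (wordProd G S (P ++ ⟨M.anch, c⟩ :: Rf))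
      (mhom M hA a (cst : XS S))).1 u = 1
    rw [mhom_wordProd, run_append, run_cons, act_anch_nonunit M hc]
    exact run_fst_one M hfu (by simp [cst])
  have e2 : (mhom M hA x (cst : XS S)).1 u ≠ 1 := by
    rw [← hb', map_mul]
    show (mhom M hA (wordProd G S (PRE ++ (CL ++ ⟨M.anch, t⟩ :: POST)))
      (mhom M hA b (cst : XS S))).1 u ≠ 1
    rw [mhom_wordProd, run_append, run_append, run_cons, act_anch_nonunit M ht]
    rw [run_fst_exact M hPRE]
    exact hCLval
  exact e2 e1

end GPAux

namespace GPAux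

open List Function Classical SimpleGraph

variable {V : Type*} {G : SimpleGraph V} {S : V → Type*} [∀ v, Monoid (S v)]

/-- Existence of a suitable `Gᶜ`-path ending at `d`, with fresh head. -/
lemma exists_fresh_path [Infinite V] (hpc : Gᶜ.Preconnected) (A : Finset V) (d : V) :
    ∃ (p : List V) (u : V), p ≠ [] ∧ p.head? = some u ∧ u ∉ A ∧
      (p ++ [d]).Nodup ∧ (p ++ [d]).Chain' (fun a b => ¬ G.Adj a b) := by
  obtain ⟨u, hu⟩ := Infinite.exists_notMem_finset (insert d A)
  have hud : u ≠ d := fun h => hu (h ▸ Finset.mem_insert_self d A)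
  obtain ⟨w⟩ := hpc u d
  set q := w.toPath.val with hq
  have hnd : q.support.Nodup := w.toPath.prop.support_nodup
  have hch : q.support.Chain' Gᶜ.Adj := q.isChain_adj_support
  have hlast : d ∈ q.support.getLast? := by
    rw [List.getLast?_eq_getLast_of_ne_nil q.support_ne_nil]
    simp [q.getLast_support]
  have hsupp : q.support.dropLast ++ [d] = q.support :=
    List.dropLast_append_getLast? d hlast
  have hne : q.support.dropLast ≠ [] := by
    intro h
    have h2 : q.support.head? = some d := by rw [← hsupp, h, List.nil_append]; rfl
    rw [q.support_eq_cons] at h2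
    simp only [List.head?_cons, Option.some.injEq] at h2
    exact hud h2
  have hhead : q.support.dropLast.head? = some u := by
    cases hdl : q.support.dropLast with
    | nil => exact absurd hdl hne
    | cons x xs =>
      have h1 : q.support.head? = some x := by
        rw [← hsupp, hdl]; rfl
      rw [q.support_eq_cons] at h1
      simp only [List.head?_cons, Option.some.injEq] at h1
      rw [List.head?_cons, ← h1]
  refine ⟨q.support.dropLast, u, hne, hhead, fun h => hu (Finset.mem_insert_of_mem h), ?_, ?_⟩
  · rw [hsupp]; exact hnd
  · rw [hsupp]
    exact hch.imp (fun a b hab => ((compl_adj G a b).1 hab).2)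

end GPAux

namespace GPAux

open List Function Classical SimpleGraph

variable {V : Type*} {G : SimpleGraph V} {S : V → Type*} [∀ v, Monoid (S v)]

/-- A canonical choice of a nontrivial (preferably non-unit) element at each vertex. -/
noncomputable def pickL (S : V → Type*) [∀ v, Monoid (S v)] [∀ v, Nontrivial (S v)]
    (v : V) : S v :=
  if h : ∃ s : S v, ¬ IsUnit s then h.choose else (exists_ne (1 : S v)).choose

lemma pickL_ne_one [∀ v, Nontrivial (S v)] (v : V) : pickL S v ≠ 1 := by
  unfold pickL
  split
  · next h => exact fun he => h.choose_spec (he ▸ isUnit_one)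
  · exact (exists_ne (1 : S v)).choose_spec

lemma pickL_not_isUnit [∀ v, Nontrivial (S v)] {v : V} (h : ∃ s : S v, ¬ IsUnit s) :
    ¬ IsUnit (pickL S v) := by
  unfold pickL
  rw [dif_pos h]
  exact h.choose_spec

variable [∀ v, Nontrivial (S v)]

/-- Letter word along a vertex list. -/
noncomputable def lmap (S : V → Type*) [∀ v, Monoid (S v)] [∀ v, Nontrivial (S v)]
    (li : List V) : List (Σ v, S v) :=
  li.map fun x => ⟨x, pickL S x⟩

@[simp] lemma lmap_fst (li : List V) : (lmap S li).map Sigma.fst = li := by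
  simp [lmap, List.map_map, Function.comp_def]

/-- The key combinatorial construction of the test word `Z`. -/
lemma blocks [Infinite V] (hpc : Gᶜ.Preconnected) :
    ∀ (n : ℕ) (D W : Finset V), D.card ≤ n →
      (∀ d ∈ D, ∃ s : S d, ¬ IsUnit s) → D ⊆ W →
      ∃ Z : List (Σ v, S v), ∀ d ∈ D, ∃ (PRE CL POST : List (Σ v, S v)) (t : S d) (u : V),
        ¬ IsUnit t ∧
        Z = PRE ++ (CL ++ ⟨d, t⟩ :: POST) ∧
        (CL.map Sigma.fst ++ [d]).Nodup ∧
        (CL.map Sigma.fst ++ [d]).Chain' (fun a b => ¬ G.Adj a b) ∧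
        CL ≠ [] ∧ (∀ l ∈ CL, l.2 ≠ (1 : S l.1)) ∧
        (CL.map Sigma.fst).head? = some u ∧ u ∉ W ∧
        (∀ l ∈ PRE, l.1 ≠ u ∧ (l.1 = d → IsUnit l.2)) := by
  intro n
  induction n with
  | zero =>
    intro D W hcard _ _
    have : D = ∅ := Finset.card_eq_zero.mp (Nat.le_zero.mp hcard)
    exact ⟨[], by simp [this]⟩
  | succ n ih =>
    intro D W hcard hD hDW
    rcases Finset.eq_empty_or_nonempty D with rfl | ⟨d₀, hd₀⟩
    · exact ⟨[], by simp⟩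
    obtain ⟨p, u, hpne, hphead, huW, hqnodup, hqchain⟩ := exists_fresh_path hpc W d₀
    set q : List V := p ++ [d₀] with hqdef
    have hd₀q : d₀ ∈ q := by simp [hqdef]
    have hqhead : q.head? = some u := by
      rw [hqdef, List.head?_append_of_ne_nil _ hpne, hphead]
    -- recursive data
    set D' : Finset V := D.filter (fun x => x ∉ q) with hD'def
    have hD'sub : D' ⊆ D := Finset.filter_subset _ _
    have hd₀D' : d₀ ∉ D' := by
      rw [hD'def, Finset.mem_filter]
      exact fun h => h.2 hd₀q
    have hcard' : D'.card ≤ n := by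
      have hsub : D' ⊆ D.erase d₀ := by
        intro x hx
        rw [Finset.mem_erase]
        exact ⟨fun he => hd₀D' (he ▸ hx), hD'sub hx⟩
      have h1 := Finset.card_le_card hsub
      have h2 := Finset.card_erase_of_mem hd₀
      omega
    set W' : Finset V := W ∪ q.toFinset with hW'def
    have hWW' : W ⊆ W' := Finset.subset_union_left
    have hqW' : ∀ x ∈ q, x ∈ W' := fun x hx => by
      rw [hW'def, Finset.mem_union]
      exact Or.inr (List.mem_toFinset.mpr hx)
    obtain ⟨Z', hZ'⟩ := ih D' W' hcard' (fun d hd => hD d (hD'sub hd))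
      (fun d hd => hWW' (hDW (hD'sub hd)))
    refine ⟨lmap S q ++ Z', ?_⟩
    intro d hd
    by_cases hdq : d ∈ q
    · -- `d` is served by the new block
      obtain ⟨q₁, q₂, hq⟩ := List.append_of_mem hdq
      have hq₁ne : q₁ ≠ [] := by
        rintro rfl
        rw [hq] at hqhead
        simp only [List.nil_append, List.head?_cons, Option.some.injEq] at hqhead
        exact huW (hqhead ▸ hDW hd)
      have hq' : q = (q₁ ++ [d]) ++ q₂ := by rw [hq]; simp
      refine ⟨[], lmap S q₁, lmap S q₂ ++ Z', pickL S d, u,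
        pickL_not_isUnit (hD d hd), ?_, ?_, ?_, ?_, ?_, ?_, huW, by simp⟩
      · rw [hq]
        simp [lmap]
      · rw [lmap_fst]
        have := hqnodup
        rw [hq'] at this
        exact this.of_append_left
      · rw [lmap_fst]
        have := hqchain
        rw [hq'] at this
        exact this.prefix (List.prefix_append _ _)
      · simp [lmap, hq₁ne]
      · intro l hl
        rw [lmap] at hl
        obtain ⟨x, _, rfl⟩ := List.mem_map.1 hl
        exact pickL_ne_one x
      · rw [lmap_fst]
        rw [hq, List.head?_append_of_ne_nil _ hq₁ne] at hqhead
        exact hqhead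
    · -- `d` is handled by the recursive word
      have hdD' : d ∈ D' := by
        rw [hD'def, Finset.mem_filter]
        exact ⟨hd, hdq⟩
      obtain ⟨PRE', CL', POST', t', u', h1, h2, h3, h4, h5, h6, h7, h8, h9⟩ := hZ' d hdD'
      refine ⟨lmap S q ++ PRE', CL', POST', t', u', h1, ?_, h3, h4, h5, h6, h7,
        fun hW => h8 (hWW' hW), ?_⟩
      · rw [h2]; simp
      · intro l hl
        rcases List.mem_append.1 hl with hl | hl
        · rw [lmap] at hl
          obtain ⟨x, hx, rfl⟩ := List.mem_map.1 hl
          constructor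
          · intro he
            exact h8 (he ▸ hqW' x hx)
          · intro he
            exact absurd (he ▸ hx) hdq
        · exact h9 l hl

end GPAux


/-- Theorem 4.3(i): for an infinite coconnected graph, every foundation set for the
graph product contains an invertible element; in particular the graph product has
property (AR). -/
theorem foundation_sets_infinite_coconnected {V : Type*} [Countable V] [Infinite V]
    (G : SimpleGraph V) (hcc : Gᶜ.Connected)
    (S : V → Type*) [∀ v, Monoid (S v)] [∀ v, Nontrivial (S v)]
    (hlc : ∀ v, LeftCancellative (S v)) (hlcm : ∀ v, IsRightLCM (S v)) :
    (∀ F : Set (GraphProduct G S), IsFoundationSet F → ∃ f ∈ F, IsUnit f) ∧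
    HasAR (GraphProduct G S) := by
  classical
  have part1 : ∀ F : Set (GraphProduct G S), IsFoundationSet F → ∃ f ∈ F, IsUnit f := by
    intro F hF
    by_contra hno
    push_neg at hno
    have hword : ∀ f ∈ F, ∃ (L P R : List (Σ v, S v)) (d : V) (c : S d),
        ¬ IsUnit c ∧ L = P ++ ⟨d, c⟩ :: R ∧ GPAux.wordProd G S L = f := by
      intro f hf
      obtain ⟨L, hL⟩ := GPAux.exists_word G S f
      have hnl : ∃ l ∈ L, ¬ IsUnit l.2 := by
        by_contra hall
        push_neg at hall
        exact hno f hf (hL ▸ GPAux.isUnit_wordProd G S hall)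
      obtain ⟨l, hl, hnu⟩ := hnl
      obtain ⟨P, R, hPR⟩ := List.append_of_mem hl
      exact ⟨L, P, R, l.1, l.2, hnu, hPR, hL⟩
    choose Lf Pf Rf df cf hcnu hsplit hfeq using hword
    set FS : Finset (GraphProduct G S) := hF.1.toFinset with hFS
    have hmemFS : ∀ {f}, f ∈ F → f ∈ FS := fun hf => hF.1.mem_toFinset.mpr hf
    have hmemF : ∀ {f}, f ∈ FS → f ∈ F := fun hf => hF.1.mem_toFinset.mp hf
    set D : Finset V := FS.attach.image (fun x => df x.1 (hmemF x.2)) with hD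
    set W : Finset V :=
      D ∪ FS.attach.biUnion (fun x => ((Lf x.1 (hmemF x.2)).map Sigma.fst).toFinset) with hW
    have hDnu : ∀ d ∈ D, ∃ s : S d, ¬ IsUnit s := by
      intro d hd
      rw [hD, Finset.mem_image] at hd
      obtain ⟨x, _, rfl⟩ := hd
      exact ⟨cf x.1 (hmemF x.2), hcnu x.1 (hmemF x.2)⟩
    have hDW : D ⊆ W := by rw [hW]; exact Finset.subset_union_left
    obtain ⟨Z, hZ⟩ := GPAux.blocks hcc.preconnected D.card D W le_rfl hDnu hDW
    obtain ⟨f₀, hf₀, hnOrth⟩ := hF.2 (GPAux.wordProd G S Z)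
    obtain ⟨PRE, CL, POST, t, u, h1, h2, h3, h4, h5, h6, h7, h8, h9⟩ :=
      hZ (df f₀ hf₀) (by
        rw [hD, Finset.mem_image]
        exact ⟨⟨f₀, hmemFS hf₀⟩, Finset.mem_attach _ _, rfl⟩)
    let M : GPAux.Mach G S :=
      { chain := CL.map Sigma.fst
        anch := df f₀ hf₀
        ne := fun h => h5 (List.map_eq_nil_iff.mp h)
        nodup := h3
        compat := h4 }
    have horth := GPAux.coreOrth M (hlc _) (Pf f₀ hf₀) (Rf f₀ hf₀) (cf f₀ hf₀)
      (hcnu f₀ hf₀)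
      (by
        intro l hl he
        apply h8
        rw [hW, Finset.mem_union]
        refine Or.inr (Finset.mem_biUnion.2 ⟨⟨f₀, hmemFS hf₀⟩, Finset.mem_attach _ _, ?_⟩)
        rw [List.mem_toFinset, ← he]
        exact List.mem_map_of_mem (f := Sigma.fst) (by
          rw [hsplit f₀ hf₀]
          exact List.mem_append_left _ hl)
      )
      PRE CL POST t h1 rfl h7 h6 h9
    have horth' : Orth (GPAux.wordProd G S (Pf f₀ hf₀ ++ ⟨df f₀ hf₀, cf f₀ hf₀⟩ :: Rf f₀ hf₀))
        (GPAux.wordProd G S (PRE ++ (CL ++ ⟨df f₀ hf₀, t⟩ :: POST))) := horth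
    rw [← hsplit f₀ hf₀, hfeq f₀ hf₀, ← h2] at horth'
    exact hnOrth horth'
  refine ⟨part1, ?_⟩
  intro F hF
  obtain ⟨f₀, hf₀, hu⟩ := part1 F hF
  refine ⟨{f₀}, ⟨Set.finite_singleton _, ?_⟩, ?_, ?_⟩
  · intro s
    refine ⟨f₀, rfl, ?_⟩
    intro hOrth
    have hOrth' : pIdeal f₀ ∩ pIdeal s = ∅ := hOrth
    have hmem : s ∈ pIdeal f₀ ∩ pIdeal s := by
      constructor
      · refine ⟨↑hu.unit⁻¹ * s, ?_⟩
        show f₀ * (↑hu.unit⁻¹ * s) = s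
        rw [← mul_assoc, IsUnit.mul_val_inv, one_mul]
      · exact ⟨1, mul_one s⟩
    rw [hOrth'] at hmem
    exact hmem
  · intro a ha b hb hab
    rw [Set.mem_singleton_iff] at ha hb
    exact absurd (ha.trans hb.symm) hab
  · intro x hx
    rw [Set.mem_singleton_iff] at hx
    exact ⟨f₀, hf₀, 1, by rw [hx, mul_one]⟩
end

section
/- For every graph Γ, the core of the right-angled Artin monoid A⁺_Γ is the free abelian submonoid generated by the universal vertices: (A⁺_Γ)_c = ⟨a_v : v ∈ V_u⟩ ≅ ⊕_{v∈V_u} ℕ, where V_u is the set of vertices adjacent to all other vertices. -/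
/-- The congruence on the free monoid on the vertices implementing the right-angled
Artin relations. -/
def raamCon {V : Type*} (G : SimpleGraph V) : Con (FreeMonoid V) :=
  conGen (fun x y => ∃ v w : V, G.Adj v w ∧
    x = FreeMonoid.of v * FreeMonoid.of w ∧ y = FreeMonoid.of w * FreeMonoid.of v)

/-- The right-angled Artin monoid of a graph. -/
def RAAM {V : Type*} (G : SimpleGraph V) := (raamCon G).Quotient

instance {V : Type*} (G : SimpleGraph V) : Monoid (RAAM G) :=
  inferInstanceAs (Monoid (raamCon G).Quotient)

/-- The generator of `RAAM G` associated to a vertex. -/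
def agen {V : Type*} (G : SimpleGraph V) (v : V) : RAAM G := (raamCon G).mk' (FreeMonoid.of v)

section RaamAux

variable {V : Type*} (G : SimpleGraph V)

/-- The quotient map, typed into `RAAM G`. -/
def rmk : FreeMonoid V →* RAAM G := (raamCon G).mk'

lemma rmk_surjective : Function.Surjective (rmk G) :=
  Con.mk'_surjective

lemma agen_eq (v : V) : agen G v = rmk G (FreeMonoid.of v) := rfl

lemma rmk_comm {u v : V} (h : G.Adj u v) :
    rmk G (FreeMonoid.of u * FreeMonoid.of v) = rmk G (FreeMonoid.of v * FreeMonoid.of u) :=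
  (Con.eq _).2 (ConGen.Rel.of _ _ ⟨u, v, h, rfl, rfl⟩)

lemma agen_comm {u v : V} (h : G.Adj u v) :
    agen G u * agen G v = agen G v * agen G u := by
  have := rmk_comm G h
  simpa [agen_eq, map_mul] using this

lemma agen_central {u : V} (hu : ∀ w : V, w ≠ u → G.Adj u w) :
    agen G u ∈ Submonoid.center (RAAM G) := by
  rw [Submonoid.mem_center_iff]
  intro y
  obtain ⟨m, rfl⟩ := rmk_surjective G y
  show rmk G m * agen G u = agen G u * rmk G m
  induction m using FreeMonoid.recOn with
  | one => simp
  | of_mul x xs ih =>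
    have h1 : agen G u * agen G x = agen G x * agen G u := by
      rcases eq_or_ne x u with rfl | hx
      · rfl
      · exact agen_comm G (hu x hx)
    have hx : rmk G (FreeMonoid.of x * xs) = agen G x * rmk G xs := by
      rw [map_mul, agen_eq]
    rw [hx, mul_assoc, ih, ← mul_assoc, ← h1, mul_assoc]

lemma central_mem_core {x : RAAM G} (hx : x ∈ Submonoid.center (RAAM G)) :
    x ∈ core (RAAM G) := by
  intro s hOrth
  have hmem : x * s ∈ pIdeal x ∩ pIdeal s := by
    constructor
    · exact ⟨s, rfl⟩
    · exact ⟨x, (Submonoid.mem_center_iff.1 hx) s⟩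
  rw [hOrth] at hmem
  exact hmem

lemma true_mem_lift {f : V → FreeMonoid Bool} {u : V}
    (hfu : f u = FreeMonoid.of true) :
    ∀ w : FreeMonoid V, u ∈ FreeMonoid.toList w →
      true ∈ FreeMonoid.toList (FreeMonoid.lift f w) := by
  intro w
  induction w using FreeMonoid.recOn with
  | one => intro h; simp [FreeMonoid.toList_one] at h
  | of_mul x xs ih =>
    intro h
    rw [FreeMonoid.toList_mul, FreeMonoid.toList_of, List.mem_append] at h
    rw [map_mul, FreeMonoid.toList_mul, List.mem_append]
    rcases h with h | h
    · left
      simp only [List.mem_singleton] at h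
      subst h
      rw [FreeMonoid.lift_eval_of, hfu]
      simp [FreeMonoid.toList_of]
    · exact Or.inr (ih h)

lemma core_letters_universal {w : FreeMonoid V}
    (hw : rmk G w ∈ core (RAAM G)) :
    ∀ u ∈ FreeMonoid.toList w, ∀ t : V, t ≠ u → G.Adj u t := by
  classical
  intro u hu
  by_contra hcon
  push_neg at hcon
  obtain ⟨t, htu, hnadj⟩ := hcon
  set f : V → FreeMonoid Bool := fun v =>
    if v = u then FreeMonoid.of true else if v = t then FreeMonoid.of false else 1 with hf
  have hker : raamCon G ≤ Con.ker (FreeMonoid.lift f) := by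
    refine Con.conGen_le.2 ?_
    rintro x y ⟨a, b, hab, rfl, rfl⟩
    have hne : a ≠ b := hab.ne
    simp only [Con.ker_rel, map_mul, FreeMonoid.lift_eval_of]
    by_cases ha : a = u
    · subst ha
      by_cases hb : b = t
      · subst hb; exact absurd hab hnadj
      · simp [hf, hne.symm, hb]
    · by_cases ha' : a = t
      · subst ha'
        by_cases hb : b = u
        · subst hb; exact absurd hab.symm hnadj
        · simp [hf, ha, hb, hne.symm]
      · simp [hf, ha, ha']
  set π : RAAM G →* FreeMonoid Bool := Con.lift _ (FreeMonoid.lift f) hker with hπ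
  have hπ_rmk : ∀ m : FreeMonoid V, π (rmk G m) = FreeMonoid.lift f m := fun m =>
    Con.lift_mk' hker m
  have hfu : f u = FreeMonoid.of true := by simp [hf]
  have htrue : true ∈ FreeMonoid.toList (FreeMonoid.lift f w) :=
    true_mem_lift hfu w hu
  obtain ⟨c, tl, hL⟩ := List.exists_cons_of_ne_nil (List.ne_nil_of_mem htrue)
  have hfvd : f (cond c t u) = FreeMonoid.of (!c) := by
    cases c
    · simp [hf]
    · simp [hf, htu]
  refine hw (agen G (cond c t u)) ?_
  rw [Orth, Set.eq_empty_iff_forall_notMem]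
  rintro z ⟨⟨r, hr⟩, ⟨r', hr'⟩⟩
  simp only at hr hr'
  have heq : π (rmk G w * r) = π (agen G (cond c t u) * r') := by
    rw [hr, hr']
  rw [map_mul, map_mul, hπ_rmk, agen_eq, hπ_rmk, FreeMonoid.lift_eval_of, hfvd] at heq
  have heqL := congrArg FreeMonoid.toList heq
  rw [FreeMonoid.toList_mul, FreeMonoid.toList_mul, hL, FreeMonoid.toList_of,
    List.cons_append, List.singleton_append] at heqL
  have : c = !c := (List.cons_eq_cons.1 heqL).1
  simp at this

lemma mk_mem_closure {w : FreeMonoid V}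
    (h : ∀ u ∈ FreeMonoid.toList w, ∀ t : V, t ≠ u → G.Adj u t) :
    rmk G w ∈
      Submonoid.closure {x : RAAM G | ∃ v : V, (∀ w : V, w ≠ v → G.Adj v w) ∧ x = agen G v} := by
  induction w using FreeMonoid.recOn with
  | one => simpa using Submonoid.one_mem _
  | of_mul x xs ih =>
    have hx : rmk G (FreeMonoid.of x * xs) = agen G x * rmk G xs := by
      rw [map_mul, agen_eq]
    rw [hx]
    refine mul_mem (Submonoid.subset_closure ⟨x, ?_, rfl⟩) (ih ?_)
    · exact h x (by simp [FreeMonoid.toList_mul, FreeMonoid.toList_of])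
    · intro u hu
      exact h u (by rw [FreeMonoid.toList_mul, List.mem_append]; exact Or.inr hu)

/-- The abelianization homomorphism counting occurrences of each letter. -/
noncomputable def abHom : RAAM G →* Multiplicative (V →₀ ℕ) :=
  Con.lift _ (FreeMonoid.lift fun v => Multiplicative.ofAdd (Finsupp.single v 1))
    (by
      refine Con.conGen_le.2 ?_
      rintro x y ⟨a, b, hab, rfl, rfl⟩
      rw [Con.ker_rel, map_mul, map_mul]
      exact mul_comm _ _)

lemma abHom_agen (v : V) : abHom G (agen G v) = Multiplicative.ofAdd (Finsupp.single v 1) :=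
  Con.lift_mk' _ _

end RaamAux

section RaamPhi

variable {V : Type*} (G : SimpleGraph V)

/-- A universal generator as an element of the center. -/
noncomputable def cgen (u : {v : V // ∀ w : V, w ≠ v → G.Adj v w}) :
    Submonoid.center (RAAM G) :=
  ⟨agen G u.1, agen_central G u.2⟩

/-- The canonical homomorphism from the free abelian monoid on universal vertices. -/
noncomputable def raamPhi :
    Multiplicative ({v : V // ∀ w : V, w ≠ v → G.Adj v w} →₀ ℕ) →* RAAM G :=
  (Submonoid.center (RAAM G)).subtype.comp
    (AddMonoidHom.toMultiplicativeLeft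
      (Finsupp.liftAddHom fun u =>
        multiplesHom (Additive (Submonoid.center (RAAM G))) (Additive.ofMul (cgen G u))))

lemma raamPhi_single (u : {v : V // ∀ w : V, w ≠ v → G.Adj v w}) (n : ℕ) :
    raamPhi G (Multiplicative.ofAdd (Finsupp.single u n)) = agen G u.1 ^ n := by
  have h1 : (Finsupp.liftAddHom fun u =>
        multiplesHom (Additive (Submonoid.center (RAAM G))) (Additive.ofMul (cgen G u)))
        (Finsupp.single u n) = n • Additive.ofMul (cgen G u) := by
    rw [Finsupp.liftAddHom_apply_single, multiplesHom_apply]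
  show ((Submonoid.center (RAAM G)).subtype)
      (Additive.toMul ((Finsupp.liftAddHom fun u =>
        multiplesHom (Additive (Submonoid.center (RAAM G))) (Additive.ofMul (cgen G u)))
        (Multiplicative.toAdd (Multiplicative.ofAdd (Finsupp.single u n))))) = agen G u.1 ^ n
  rw [toAdd_ofAdd, h1]
  have : Additive.toMul (n • Additive.ofMul (cgen G u)) = cgen G u ^ n := rfl
  rw [this]
  simp [cgen]

lemma raamPhi_ofAdd_add (x y : {v : V // ∀ w : V, w ≠ v → G.Adj v w} →₀ ℕ) :
    raamPhi G (Multiplicative.ofAdd (x + y)) =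
      raamPhi G (Multiplicative.ofAdd x) * raamPhi G (Multiplicative.ofAdd y) :=
  map_mul (raamPhi G) (Multiplicative.ofAdd x) (Multiplicative.ofAdd y)

lemma abHom_raamPhi (x : {v : V // ∀ w : V, w ≠ v → G.Adj v w} →₀ ℕ) :
    abHom G (raamPhi G (Multiplicative.ofAdd x)) =
      Multiplicative.ofAdd (Finsupp.mapDomain Subtype.val x) := by
  induction x using Finsupp.induction with
  | zero => simp
  | single_add a b f haf hb ih =>
    rw [raamPhi_ofAdd_add, map_mul, ih, raamPhi_single, map_pow, abHom_agen,
      Finsupp.mapDomain_add, Finsupp.mapDomain_single]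
    have h2 : (Multiplicative.ofAdd (Finsupp.single (a : V) 1)) ^ b
        = Multiplicative.ofAdd (Finsupp.single (a : V) b) := by
      rw [← ofAdd_nsmul, Finsupp.smul_single, smul_eq_mul, mul_one]
    rw [h2, ← ofAdd_add]

end RaamPhi

/-- Corollary 3.4(i), second part: the core of a right-angled Artin monoid is the free
abelian submonoid generated by the universal vertices. -/
theorem raam_core {V : Type*} [Countable V] (G : SimpleGraph V) :
    core (RAAM G) =
      ↑(Submonoid.closure {x : RAAM G | ∃ v : V, (∀ w : V, w ≠ v → G.Adj v w) ∧ x = agen G v}) ∧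
    ∃ φ : Multiplicative ({v : V // ∀ w : V, w ≠ v → G.Adj v w} →₀ ℕ) →* RAAM G,
      Function.Injective φ ∧ Set.range φ = core (RAAM G) ∧
      ∀ u : {v : V // ∀ w : V, w ≠ v → G.Adj v w},
        φ (Multiplicative.ofAdd (Finsupp.single u 1)) = agen G u.1 := by
  set S : Set (RAAM G) :=
    {x : RAAM G | ∃ v : V, (∀ w : V, w ≠ v → G.Adj v w) ∧ x = agen G v} with hS
  have hcore_eq : core (RAAM G) = ↑(Submonoid.closure S) := by
    apply Set.Subset.antisymm
    · intro x hx
      obtain ⟨w, rfl⟩ := Con.mk'_surjective (c := raamCon G) x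
      exact mk_mem_closure G (core_letters_universal G hx)
    · intro x hx
      have hcen : Submonoid.closure S ≤ Submonoid.center (RAAM G) := by
        refine Submonoid.closure_le.2 ?_
        rintro _ ⟨v, hv, rfl⟩
        exact agen_central G hv
      exact central_mem_core G (hcen hx)
  refine ⟨hcore_eq, raamPhi G, ?_, ?_, fun u => by rw [raamPhi_single, pow_one]⟩
  · intro x y hxy
    have hx : x = Multiplicative.ofAdd (Multiplicative.toAdd x) := rfl
    have hy : y = Multiplicative.ofAdd (Multiplicative.toAdd y) := rfl
    rw [hx, hy] at hxy ⊢
    have := congrArg (abHom G) hxy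
    rw [abHom_raamPhi, abHom_raamPhi] at this
    have h2 : Finsupp.mapDomain (Subtype.val) (Multiplicative.toAdd x)
        = Finsupp.mapDomain (Subtype.val) (Multiplicative.toAdd y) :=
      Multiplicative.ofAdd.injective this
    have h3 := Finsupp.mapDomain_injective (Subtype.val_injective) h2
    rw [h3]
  · rw [hcore_eq]
    apply Set.Subset.antisymm
    · rintro _ ⟨x, rfl⟩
      have hx : x = Multiplicative.ofAdd (Multiplicative.toAdd x) := rfl
      rw [hx]
      set g := Multiplicative.toAdd x with hg
      clear_value g
      clear hx hg x
      induction g using Finsupp.induction with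
      | zero => simpa using Submonoid.one_mem _
      | single_add a b f haf hb ih =>
        rw [raamPhi_ofAdd_add, raamPhi_single]
        refine mul_mem (pow_mem (Submonoid.subset_closure ?_) b) ih
        exact ⟨a.1, a.2, rfl⟩
    · intro x hx
      have : Submonoid.closure S ≤ MonoidHom.mrange (raamPhi G) := by
        refine Submonoid.closure_le.2 ?_
        rintro _ ⟨v, hv, rfl⟩
        exact MonoidHom.mem_mrange.2 ⟨Multiplicative.ofAdd (Finsupp.single ⟨v, hv⟩ 1),
          by rw [raamPhi_single, pow_one]⟩
      exact this hx
end

section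
/- For a graph Γ, the action α of the core (A⁺_Γ)_c on the quotient A⁺_Γ/∼ by the core relation, given by a·[s] = [as], is faithful if and only if Γ has no universal vertex. -/
open Classical in
/-- The letter-killing map keeping only `v ↦ false` and `w ↦ true`. -/
noncomputable def raamF {V : Type*} (v w : V) : V → FreeMonoid Bool :=
  fun x => if x = v then FreeMonoid.of false else if x = w then FreeMonoid.of true else 1

/-- Lift the letter-wise map to a hom on `RAAM G`, for non-adjacent distinct `v, w`
(so the images need not commute). -/
noncomputable def raamProj {V : Type*} (G : SimpleGraph V) (v w : V)
    (hvw : ¬ G.Adj v w) : Con.Quotient (raamCon G) →* FreeMonoid Bool :=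
  Con.lift (raamCon G) (FreeMonoid.lift (raamF v w)) (by
    apply Con.conGen_le.mpr
    rintro x y ⟨p, q, hadj, rfl, rfl⟩
    show FreeMonoid.lift _ _ = FreeMonoid.lift _ _
    simp only [map_mul, FreeMonoid.lift_eval_of]
    have hpq : p ≠ q := hadj.ne
    unfold raamF
    by_cases hp : p = v
    · subst hp
      by_cases hq : q = w
      · exact absurd (hq ▸ hadj) hvw
      · simp [hpq.symm, hq]
    · by_cases hp' : p = w
      · subst hp'
        by_cases hq : q = v
        · exact absurd (hq ▸ hadj.symm) hvw
        · simp [hpq.symm, hq]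
      · simp [hp, hp'])

theorem raamProj_mk' {V : Type*} (G : SimpleGraph V) (v w : V) (hvw : ¬ G.Adj v w)
    (u : FreeMonoid V) :
    raamProj G v w hvw ((raamCon G).mk' u) = FreeMonoid.lift (raamF v w) u :=
  Con.lift_mk' _ _

/-- Length homomorphism. -/
def raamLen {V : Type*} (G : SimpleGraph V) :
    Con.Quotient (raamCon G) →* Multiplicative ℕ :=
  Con.lift (raamCon G) (FreeMonoid.lift (fun _ => Multiplicative.ofAdd 1)) (by
    apply Con.conGen_le.mpr
    rintro x y ⟨p, q, hadj, rfl, rfl⟩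
    show FreeMonoid.lift _ _ = FreeMonoid.lift _ _
    simp [mul_comm])

theorem raam_agen_ne_one {V : Type*} (G : SimpleGraph V) (v : V) : agen G v ≠ 1 := by
  intro h
  have h1 : raamLen G (agen G v) = Multiplicative.ofAdd 1 := by
    have := Con.lift_mk' (c := raamCon G)
      (f := FreeMonoid.lift (fun _ : V => Multiplicative.ofAdd 1)) (by
        apply Con.conGen_le.mpr
        rintro x y ⟨p, q, hadj, rfl, rfl⟩
        show FreeMonoid.lift _ _ = FreeMonoid.lift _ _
        simp [mul_comm]) (FreeMonoid.of v)
    simpa [raamLen, agen] using this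
  rw [h] at h1
  change raamLen G (1 : (raamCon G).Quotient) = _ at h1
  rw [map_one (raamLen G)] at h1
  have := congrArg Multiplicative.toAdd h1
  simp at this

theorem raam_agen_central' {V : Type*} (G : SimpleGraph V) (v : V)
    (hv : ∀ w : V, w ≠ v → G.Adj v w) (u : FreeMonoid V) :
    (raamCon G).mk' (FreeMonoid.of v) * (raamCon G).mk' u
      = (raamCon G).mk' u * (raamCon G).mk' (FreeMonoid.of v) := by
  induction u using FreeMonoid.recOn with
  | one => simp
  | of_mul w xs ih =>
    have hswap : (raamCon G).mk' (FreeMonoid.of v) * (raamCon G).mk' (FreeMonoid.of w)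
        = (raamCon G).mk' (FreeMonoid.of w) * (raamCon G).mk' (FreeMonoid.of v) := by
      by_cases hw : w = v
      · subst hw; rfl
      · rw [← map_mul, ← map_mul]
        have hrel : raamCon G (FreeMonoid.of v * FreeMonoid.of w)
            (FreeMonoid.of w * FreeMonoid.of v) :=
          ConGen.Rel.of _ _ ⟨v, w, hv w hw, rfl, rfl⟩
        exact Con.eq _ |>.mpr hrel
    rw [map_mul, ← mul_assoc, hswap, mul_assoc, ih, ← mul_assoc]

theorem raam_agen_central {V : Type*} (G : SimpleGraph V) (v : V)
    (hv : ∀ w : V, w ≠ v → G.Adj v w) (x : RAAM G) : agen G v * x = x * agen G v := by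
  obtain ⟨u, rfl⟩ := Con.mk'_surjective x
  exact raam_agen_central' G v hv u

theorem raam_core_trivial {V : Type*} (G : SimpleGraph V)
    (h : ¬ ∃ v : V, ∀ w : V, w ≠ v → G.Adj v w) (a : RAAM G) (ha : a ∈ core (RAAM G)) :
    a = 1 := by
  push_neg at h
  obtain ⟨u, rfl⟩ := Con.mk'_surjective a
  induction u using FreeMonoid.recOn with
  | one => rfl
  | of_mul v xs _ =>
    exfalso
    obtain ⟨w, hw, hnadj⟩ := h v
    have horth : Orth ((raamCon G).mk' (FreeMonoid.of v * xs)) (agen G w) := by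
      unfold Orth
      rw [Set.eq_empty_iff_forall_notMem]
      rintro z ⟨⟨x, hx⟩, ⟨y, hy⟩⟩
      obtain ⟨X, rfl⟩ := Con.mk'_surjective x
      obtain ⟨Y, rfl⟩ := Con.mk'_surjective y
      have key : (raamCon G).mk' (FreeMonoid.of v * xs * X)
          = (raamCon G).mk' (FreeMonoid.of w * Y) := by
        simp only at hx hy
        rw [map_mul, map_mul]
        rw [map_mul] at hx
        exact hx.trans hy.symm
      have := congrArg (raamProj G v w hnadj) key
      rw [raamProj_mk', raamProj_mk'] at this
      have htl := congrArg FreeMonoid.toList this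
      simp only [map_mul, FreeMonoid.lift_eval_of, FreeMonoid.toList_mul] at htl
      have hfv : raamF v w v = FreeMonoid.of false := by simp [raamF]
      have hfw : raamF v w w = FreeMonoid.of true := by simp [raamF, hw]
      rw [hfv, hfw] at htl
      have hh := congrArg List.head? htl
      simp [FreeMonoid.toList_of] at hh
    exact ha (agen G w) horth

/-- Corollary 3.4(iv): the action of the core of `A⁺_Γ` on core classes is faithful iff
`Γ` has no universal vertex. -/
theorem raam_core_action_faithful {V : Type*} [Countable V] (G : SimpleGraph V) :
    (∀ a ∈ core (RAAM G), ∀ b ∈ core (RAAM G),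
        (∀ s : RAAM G, coreRel (a * s) (b * s)) → a = b) ↔
      ¬ ∃ v : V, ∀ w : V, w ≠ v → G.Adj v w := by
  constructor
  · rintro hf ⟨v, hv⟩
    have hcen := raam_agen_central G v hv
    have hone : (1 : RAAM G) ∈ core (RAAM G) := by
      intro s hs
      rw [Orth, Set.eq_empty_iff_forall_notMem] at hs
      exact hs s (Set.mem_inter ⟨s, one_mul s⟩ ⟨1, mul_one s⟩)
    have hav : agen G v ∈ core (RAAM G) := by
      intro s hs
      rw [Orth, Set.eq_empty_iff_forall_notMem] at hs
      exact hs (agen G v * s) (Set.mem_inter ⟨s, rfl⟩ ⟨agen G v, (hcen s).symm⟩)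
    have := hf (agen G v) hav 1 hone (fun s => by
      refine ⟨1, hone, agen G v, hav, ?_⟩
      rw [mul_one, one_mul, hcen s])
    exact raam_agen_ne_one G v this
  · intro h a ha b hb _
    rw [raam_core_trivial G h a ha, raam_core_trivial G h b hb]
end
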